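/- Let f be a nonzero real number, K a positive real number, q a real number, and P a polynomial with complex coefficients. Then both limits below exist and lim_{ε→0⁺} ∫_{-∞}^{∞} exp(iπf α²/(2K)) · exp((2πi q/K)·α) · P(α) · exp(-εα²) dα = exp(-2πi q²/(K f)) · lim_{ε→0⁺} ∫_{-∞}^{∞} exp(iπf α²/(2K)) · P(α - 2q/f) · exp(-εα²) dα. -/

import Mathlib

open MeasureTheory Topology Real Filter Polynomial Complex

noncomputable section CSaux

/-- The regularized integral of `Q(x) e^{b x² + c x}`. -/
def Jint (b c : ℂ) (Q : Polynomial ℂ) : ℂ :=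
  ∫ x : ℝ, Q.eval (x : ℂ) * Complex.exp (b * (x : ℂ) ^ 2 + c * (x : ℂ))

lemma CS.re_quad (b c : ℂ) (x : ℝ) :
    (b * (x : ℂ) ^ 2 + c * (x : ℂ)).re = b.re * x ^ 2 + c.re * x := by
  simp [Complex.add_re, Complex.mul_re, ← Complex.ofReal_pow]

lemma CS.norm_term (b c : ℂ) (x : ℝ) (z : ℂ) :
    ‖z * Complex.exp (b * (x : ℂ) ^ 2 + c * (x : ℂ))‖
      = ‖z‖ * Real.exp (b.re * x ^ 2 + c.re * x) := by
  rw [norm_mul, Complex.norm_exp, CS.re_quad]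

lemma CS.integrable_pow (b : ℂ) (hb : b.re < 0) (c : ℂ) (n : ℕ) :
    Integrable (fun x : ℝ => (x : ℂ) ^ n * Complex.exp (b * (x : ℂ) ^ 2 + c * (x : ℂ))) := by
  have hb2 : (b / 2).re < 0 := by
    have : (b / 2).re = b.re / 2 := by
      simp [Complex.div_re, Complex.normSq_apply]
    rw [this]; linarith
  have hg : Integrable (fun x : ℝ => Complex.exp ((b / 2) * (x : ℂ) ^ 2 + c * (x : ℂ))) := by
    simpa using integrable_cexp_quadratic' hb2 c 0
  have hcont : Continuous (fun x : ℝ => (x : ℂ) ^ n * Complex.exp (b * (x : ℂ) ^ 2 + c * (x : ℂ))) := by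
    exact (Complex.continuous_ofReal.pow n).mul (Complex.continuous_exp.comp (by continuity))
  refine hcont.locallyIntegrable.integrable_of_isBigO_cocompact ?_ (hg.integrableAtFilter _)
  rw [Asymptotics.isBigO_iff]
  refine ⟨1, ?_⟩
  have htend : Tendsto (fun x : ℝ => |x| ^ (n : ℝ) * Real.exp (-(-b.re / 2) * x ^ 2))
      (cocompact ℝ) (𝓝 0) := tendsto_rpow_abs_mul_exp_neg_mul_sq_cocompact (by linarith) _
  filter_upwards [htend.eventually_lt_const one_pos] with x hx
  rw [CS.norm_term, Complex.norm_exp, CS.re_quad,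
    norm_pow, Complex.norm_real, Real.norm_eq_abs]
  have h1 : b.re * x ^ 2 + c.re * x = (-(-b.re / 2) * x ^ 2) + ((b / 2).re * x ^ 2 + c.re * x) := by
    have : (b / 2).re = b.re / 2 := by
      simp [Complex.div_re, Complex.normSq_apply]
    rw [this]; ring
  rw [h1, Real.exp_add, ← mul_assoc, one_mul]
  refine mul_le_of_le_one_left (Real.exp_nonneg _) ?_
  rw [← Real.rpow_natCast |x| n]
  exact hx.le

lemma CS.integrable_poly (b : ℂ) (hb : b.re < 0) (c : ℂ) (Q : Polynomial ℂ) :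
    Integrable (fun x : ℝ => Q.eval (x : ℂ) * Complex.exp (b * (x : ℂ) ^ 2 + c * (x : ℂ))) := by
  have h : ∀ x : ℝ, Q.eval (x : ℂ)
      = ∑ i ∈ Finset.range (Q.natDegree + 1), Q.coeff i * (x : ℂ) ^ i :=
    fun x => eval_eq_sum_range _
  simp_rw [h, Finset.sum_mul]
  refine integrable_finset_sum _ fun i _ => ?_
  simpa [mul_assoc] using (CS.integrable_pow b hb c i).const_mul (Q.coeff i)


lemma CS.hasDeriv (b c : ℂ) (Q : Polynomial ℂ) (x : ℝ) :
    HasDerivAt (fun y : ℝ => Q.eval (y : ℂ) * Complex.exp (b * (y : ℂ) ^ 2 + c * (y : ℂ)))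
      ((derivative Q + C (2 * b) * (X * Q) + C c * Q).eval (x : ℂ)
        * Complex.exp (b * (x : ℂ) ^ 2 + c * (x : ℂ))) x := by
  have hquad : HasDerivAt (fun z : ℂ => b * z ^ 2 + c * z) (2 * b * (x : ℂ) + c) (x : ℂ) := by
    have h1 := (hasDerivAt_pow 2 (x : ℂ)).const_mul b
    have h2 := (hasDerivAt_id (x : ℂ)).const_mul c
    refine (h1.add h2).congr_deriv ?_
    simp; ring
  have := ((Q.hasDerivAt (x : ℂ)).mul hquad.cexp).comp_ofReal
  refine this.congr_deriv ?_
  simp only [eval_add, eval_mul, eval_C, eval_X]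
  ring

lemma CS.Jint_add (b : ℂ) (hb : b.re < 0) (c : ℂ) (Q R : Polynomial ℂ) :
    Jint b c (Q + R) = Jint b c Q + Jint b c R := by
  unfold Jint
  simp_rw [eval_add, add_mul]
  exact integral_add (CS.integrable_poly b hb c Q) (CS.integrable_poly b hb c R)

lemma CS.Jint_C_mul (b c : ℂ) (k : ℂ) (Q : Polynomial ℂ) :
    Jint b c (C k * Q) = k * Jint b c Q := by
  unfold Jint
  simp_rw [eval_mul, eval_C, mul_assoc]
  exact integral_const_mul _ _

lemma CS.Jint_X_mul (b : ℂ) (hb : b.re < 0) (c : ℂ) (Q : Polynomial ℂ) :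
    Jint b c (X * Q) = -(Jint b c (derivative Q) + c * Jint b c Q) / (2 * b) := by
  have hb0 : b ≠ 0 := fun h => by simp [h] at hb
  have key : Jint b c (derivative Q + C (2 * b) * (X * Q) + C c * Q) = 0 := by
    unfold Jint
    exact integral_eq_zero_of_hasDerivAt_of_integrable (CS.hasDeriv b c Q)
      (CS.integrable_poly b hb c _) (CS.integrable_poly b hb c Q)
  rw [CS.Jint_add b hb c _ _, CS.Jint_add b hb c _ _, CS.Jint_C_mul, CS.Jint_C_mul] at key
  rw [eq_div_iff (mul_ne_zero two_ne_zero hb0)]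
  linear_combination key

noncomputable def Gval (a c : ℂ) : ℂ :=
  ((π : ℂ) / -a) ^ ((1 : ℂ) / 2) * Complex.exp (0 - c ^ 2 / (4 * a))

noncomputable def Mseq (a c : ℂ) : ℕ → ℂ
  | 0 => Gval a c
  | 1 => -(c * Gval a c) / (2 * a)
  | (n + 2) => -(((n + 1 : ℕ) : ℂ) * Mseq a c n + c * Mseq a c (n + 1)) / (2 * a)

lemma Mseq_succ (a c : ℂ) (m : ℕ) :
    Mseq a c (m + 1) = -(((m : ℕ) : ℂ) * Mseq a c (m - 1) + c * Mseq a c m) / (2 * a) := by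
  cases m <;> simp [Mseq]

lemma CS.ha0 {a : ℂ} (him : a.im ≠ 0) : a ≠ 0 := fun h => him (by simp [h])

lemma CS.hre {a : ℂ} (ha : a.re = 0) : ∀ ε : ℝ, 0 < ε → (a - (ε : ℂ)).re < 0 := by
  intro ε hε
  simp only [Complex.sub_re, Complex.ofReal_re, ha, zero_sub]
  linarith

lemma CS.tendsto_sub (a : ℂ) : Tendsto (fun ε : ℝ => a - (ε : ℂ)) (𝓝[>] (0 : ℝ)) (𝓝 a) := by
  have hns : Continuous (fun ε : ℝ => a - (ε : ℂ)) := by continuity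
  simpa using (hns.tendsto 0).mono_left (nhdsWithin_le_nhds : 𝓝[Set.Ioi (0 : ℝ)] 0 ≤ _)

lemma CS.tendsto_G {a : ℂ} (ha : a.re = 0) (him : a.im ≠ 0) (c : ℂ) :
    Tendsto (fun ε : ℝ => ((π : ℂ) / -(a - (ε : ℂ))) ^ ((1 : ℂ) / 2)
      * Complex.exp (0 - c ^ 2 / (4 * (a - (ε : ℂ))))) (𝓝[>] (0 : ℝ)) (𝓝 (Gval a c)) := by
  have ha0 : a ≠ 0 := CS.ha0 him
  have him2 : ((π : ℂ) / -a).im ≠ 0 := by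
    have hval : ((π : ℂ) / -a).im = π * a.im / Complex.normSq (-a) := by
      rw [Complex.div_im]
      simp [ha]
      ring
    rw [hval]
    exact div_ne_zero (mul_ne_zero pi_ne_zero him)
      ((Complex.normSq_pos.mpr (neg_ne_zero.mpr ha0)).ne')
  have h1 : ContinuousAt (fun z : ℂ => (π : ℂ) / -z) a :=
    continuousAt_const.div continuous_neg.continuousAt (neg_ne_zero.mpr ha0)
  have h12 : ContinuousAt (fun z : ℂ => ((π : ℂ) / -z) ^ ((1 : ℂ) / 2)) a :=
    h1.cpow continuousAt_const (Complex.mem_slitPlane_iff.mpr (Or.inr him2))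
  have h3 : ContinuousAt (fun z : ℂ => Complex.exp (0 - c ^ 2 / (4 * z))) a := by
    apply Complex.continuous_exp.continuousAt.comp
    exact continuousAt_const.sub (continuousAt_const.div
      (continuous_const.mul continuous_id).continuousAt
      (mul_ne_zero (by norm_num) ha0))
  exact (h12.mul h3).tendsto.comp (CS.tendsto_sub a)

lemma CS.tendsto_Jint_pow {a : ℂ} (ha : a.re = 0) (him : a.im ≠ 0) (c : ℂ) :
    ∀ n : ℕ, Tendsto (fun ε : ℝ => Jint (a - (ε : ℂ)) c (X ^ n)) (𝓝[>] (0 : ℝ))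
      (𝓝 (Mseq a c n)) := by
  have ha0 : a ≠ 0 := CS.ha0 him
  have h2a : (2 : ℂ) * a ≠ 0 := mul_ne_zero two_ne_zero ha0
  have htends2 : Tendsto (fun ε : ℝ => 2 * (a - (ε : ℂ))) (𝓝[>] (0 : ℝ)) (𝓝 (2 * a)) :=
    (CS.tendsto_sub a).const_mul 2
  intro n
  induction n using Nat.strong_induction_on with
  | _ n ih =>
    cases n with
    | zero =>
      have heq : ∀ᶠ ε : ℝ in 𝓝[>] (0 : ℝ), ((π : ℂ) / -(a - (ε : ℂ))) ^ ((1 : ℂ) / 2)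
          * Complex.exp (0 - c ^ 2 / (4 * (a - (ε : ℂ)))) = Jint (a - (ε : ℂ)) c (X ^ 0) := by
        filter_upwards [self_mem_nhdsWithin] with ε hε
        have := integral_cexp_quadratic (CS.hre ha ε hε) c 0
        unfold Jint
        simp only [pow_zero, eval_one, one_mul]
        rw [← this]
        congr 1 with x
        ring_nf
      exact ((CS.tendsto_G ha him c).congr' heq :)
    | succ m =>
      have recur : ∀ᶠ ε : ℝ in 𝓝[>] (0 : ℝ),
          -(((m : ℕ) : ℂ) * Jint (a - (ε : ℂ)) c (X ^ (m - 1))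
            + c * Jint (a - (ε : ℂ)) c (X ^ m)) / (2 * (a - (ε : ℂ)))
          = Jint (a - (ε : ℂ)) c (X ^ (m + 1)) := by
        filter_upwards [self_mem_nhdsWithin] with ε hε
        rw [pow_succ, mul_comm (X ^ m) X, CS.Jint_X_mul _ (CS.hre ha ε hε),
          derivative_X_pow, CS.Jint_C_mul]
      have hT : Tendsto (fun ε : ℝ =>
          -(((m : ℕ) : ℂ) * Jint (a - (ε : ℂ)) c (X ^ (m - 1))
            + c * Jint (a - (ε : ℂ)) c (X ^ m)) / (2 * (a - (ε : ℂ)))) (𝓝[>] (0 : ℝ))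
          (𝓝 (-(((m : ℕ) : ℂ) * Mseq a c (m - 1) + c * Mseq a c m) / (2 * a))) := by
        exact (((tendsto_const_nhds.mul (ih (m - 1) (by omega))).add
          (tendsto_const_nhds.mul (ih m (by omega)))).neg).div htends2 h2a
      rw [Mseq_succ]
      exact hT.congr' recur

noncomputable def Lfun (a c : ℂ) (Q : Polynomial ℂ) : ℂ :=
  ∑ n ∈ Finset.range (Q.natDegree + 1), Q.coeff n * Mseq a c n

lemma CS.tendsto_Jint {a : ℂ} (ha : a.re = 0) (him : a.im ≠ 0) (c : ℂ) (Q : Polynomial ℂ) :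
    Tendsto (fun ε : ℝ => Jint (a - (ε : ℂ)) c Q) (𝓝[>] (0 : ℝ)) (𝓝 (Lfun a c Q)) := by
  have heq : ∀ᶠ ε : ℝ in 𝓝[>] (0 : ℝ),
      (∑ n ∈ Finset.range (Q.natDegree + 1), Q.coeff n * Jint (a - (ε : ℂ)) c (X ^ n))
        = Jint (a - (ε : ℂ)) c Q := by
    filter_upwards [self_mem_nhdsWithin] with ε hε
    unfold Jint
    have h : ∀ x : ℝ, Q.eval (x : ℂ)
        = ∑ i ∈ Finset.range (Q.natDegree + 1), Q.coeff i * (x : ℂ) ^ i :=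
      fun x => eval_eq_sum_range _
    simp_rw [h, Finset.sum_mul, mul_assoc]
    rw [integral_finset_sum _ (fun i _ =>
      ((CS.integrable_pow _ (CS.hre ha ε hε) c i).const_mul (Q.coeff i)))]
    congr 1 with i
    rw [integral_const_mul]
    simp
  exact (tendsto_finset_sum _ (fun i _ =>
    (CS.tendsto_Jint_pow ha him c i).const_mul (Q.coeff i))).congr' heq

lemma CS.Lfun_add {a : ℂ} (ha : a.re = 0) (him : a.im ≠ 0) (c : ℂ) (Q R : Polynomial ℂ) :
    Lfun a c (Q + R) = Lfun a c Q + Lfun a c R := by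
  refine tendsto_nhds_unique (CS.tendsto_Jint ha him c (Q + R)) ?_
  refine ((CS.tendsto_Jint ha him c Q).add (CS.tendsto_Jint ha him c R)).congr' ?_
  filter_upwards [self_mem_nhdsWithin] with ε hε
  exact (CS.Jint_add _ (CS.hre ha ε hε) c Q R).symm

lemma CS.Lfun_C_mul {a : ℂ} (ha : a.re = 0) (him : a.im ≠ 0) (c k : ℂ) (Q : Polynomial ℂ) :
    Lfun a c (C k * Q) = k * Lfun a c Q := by
  refine tendsto_nhds_unique (CS.tendsto_Jint ha him c (C k * Q)) ?_
  refine ((CS.tendsto_Jint ha him c Q).const_mul k).congr' ?_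
  filter_upwards with ε
  exact (CS.Jint_C_mul _ c k Q).symm

lemma CS.Lfun_X_mul {a : ℂ} (ha : a.re = 0) (him : a.im ≠ 0) (c : ℂ) (Q : Polynomial ℂ) :
    Lfun a c (X * Q) = -(Lfun a c (derivative Q) + c * Lfun a c Q) / (2 * a) := by
  have ha0 : a ≠ 0 := CS.ha0 him
  refine tendsto_nhds_unique (CS.tendsto_Jint ha him c (X * Q)) ?_
  have hT := (((CS.tendsto_Jint ha him c (derivative Q)).add
    ((CS.tendsto_Jint ha him c Q).const_mul c)).neg).div
    ((CS.tendsto_sub a).const_mul 2) (mul_ne_zero two_ne_zero ha0)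
  refine hT.congr' ?_
  filter_upwards [self_mem_nhdsWithin] with ε hε
  exact (CS.Jint_X_mul _ (CS.hre ha ε hε) c Q).symm

lemma CS.Lfun_C {a c : ℂ} (k : ℂ) : Lfun a c (C k) = k * Gval a c := by
  simp [Lfun, Mseq]

lemma CS.Gval_eq (a c : ℂ) : Gval a c = Complex.exp (0 - c ^ 2 / (4 * a)) * Gval a 0 := by
  simp [Gval]
  ring

lemma CS.Lfun_shift {a : ℂ} (ha : a.re = 0) (him : a.im ≠ 0) (c : ℂ) :
    ∀ (n : ℕ) (Q : Polynomial ℂ), Q.natDegree ≤ n →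
      Lfun a c Q
        = Complex.exp (0 - c ^ 2 / (4 * a)) * Lfun a 0 (Q.comp (X - C (c / (2 * a)))) := by
  have ha0 : a ≠ 0 := CS.ha0 him
  have hbase : ∀ Q : Polynomial ℂ, Q.natDegree = 0 →
      Lfun a c Q
        = Complex.exp (0 - c ^ 2 / (4 * a)) * Lfun a 0 (Q.comp (X - C (c / (2 * a)))) := by
    intro Q h0
    obtain ⟨k, rfl⟩ := Polynomial.natDegree_eq_zero.mp h0
    rw [C_comp, CS.Lfun_C, CS.Lfun_C, CS.Gval_eq a c]
    ring
  intro n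
  induction n with
  | zero => exact fun Q hQ => hbase Q (Nat.le_zero.mp hQ)
  | succ n ih =>
    intro Q hQ
    by_cases h0 : Q.natDegree = 0
    · exact hbase Q h0
    · have hD1 : Q.divX.natDegree ≤ n := by
        have := Q.natDegree_divX_eq_natDegree_tsub_one
        omega
      have hD2 : (derivative Q.divX).natDegree ≤ n :=
        (natDegree_derivative_le _).trans (by omega)
      have hrw : Q = C (Q.coeff 0) + X * Q.divX := by
        conv_lhs => rw [← Q.divX_mul_X_add]
        ring
      have e1 : Lfun a c Q = Q.coeff 0 * Gval a c
          + -(Lfun a c (derivative Q.divX) + c * Lfun a c Q.divX) / (2 * a) := by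
        conv_lhs => rw [hrw]
        rw [CS.Lfun_add ha him, CS.Lfun_C, CS.Lfun_X_mul ha him]
      have e2 : Q.comp (X - C (c / (2 * a))) = C (Q.coeff 0)
          + (X * (Q.divX.comp (X - C (c / (2 * a))))
            + C (-(c / (2 * a))) * (Q.divX.comp (X - C (c / (2 * a))))) := by
        conv_lhs => rw [hrw]
        rw [add_comp, C_comp, mul_comp, X_comp, map_neg]
        ring
      have e4 : derivative (Q.divX.comp (X - C (c / (2 * a))))
          = (derivative Q.divX).comp (X - C (c / (2 * a))) := by
        rw [derivative_comp]
        simp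
      have e3 : Lfun a 0 (Q.comp (X - C (c / (2 * a)))) = Q.coeff 0 * Gval a 0
          + (-(Lfun a 0 ((derivative Q.divX).comp (X - C (c / (2 * a))))
               + 0 * Lfun a 0 (Q.divX.comp (X - C (c / (2 * a))))) / (2 * a)
            + -(c / (2 * a)) * Lfun a 0 (Q.divX.comp (X - C (c / (2 * a))))) := by
        rw [e2, CS.Lfun_add ha him, CS.Lfun_add ha him, CS.Lfun_C,
          CS.Lfun_X_mul ha him, CS.Lfun_C_mul ha him, e4]
      rw [e1, e3, ih _ hD1, ih _ hD2, CS.Gval_eq a c]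
      field_simp
      ring

/-- Completing the square in the regularized Gaussian integral: for `f ≠ 0`,
`K > 0`, `q : ℝ` and a polynomial `P` over `ℂ`, both regularized limits exist
and
`lim_{ε→0⁺} ∫ e^{iπfα²/(2K)} e^{(2πiq/K)α} P(α) e^{-εα²} dα
 = e^{-2πi q²/(Kf)} · lim_{ε→0⁺} ∫ e^{iπfα²/(2K)} P(α - 2q/f) e^{-εα²} dα`. -/
theorem gaussian_complete_the_square (f K q : ℝ) (hf : f ≠ 0) (hK : 0 < K)
    (P : Polynomial ℂ) :
    ∃ A B : ℂ,
      Filter.Tendsto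
        (fun ε : ℝ => ∫ α : ℝ,
          Complex.exp (Complex.I * (π : ℂ) * (f : ℂ) * (α : ℂ) ^ 2 / (2 * (K : ℂ))) *
            Complex.exp ((2 * (π : ℂ) * Complex.I * (q : ℂ) / (K : ℂ)) * (α : ℂ)) *
            P.eval (α : ℂ) * Complex.exp (-(ε : ℂ) * (α : ℂ) ^ 2))
        (𝓝[>] 0) (𝓝 A) ∧
      Filter.Tendsto
        (fun ε : ℝ => ∫ α : ℝ,
          Complex.exp (Complex.I * (π : ℂ) * (f : ℂ) * (α : ℂ) ^ 2 / (2 * (K : ℂ))) *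
            P.eval ((α : ℂ) - 2 * (q : ℂ) / (f : ℂ)) *
            Complex.exp (-(ε : ℂ) * (α : ℂ) ^ 2))
        (𝓝[>] 0) (𝓝 B) ∧
      A = Complex.exp (-(2 * (π : ℂ) * Complex.I * (q : ℂ) ^ 2) / ((K : ℂ) * (f : ℂ))) * B := by
  have hKne : (K : ℂ) ≠ 0 := Complex.ofReal_ne_zero.mpr hK.ne'
  have hfne : (f : ℂ) ≠ 0 := Complex.ofReal_ne_zero.mpr hf
  have hpine : (π : ℂ) ≠ 0 := Complex.ofReal_ne_zero.mpr pi_ne_zero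
  set a : ℂ := Complex.I * (π : ℂ) * (f : ℂ) / (2 * (K : ℂ)) with ha_def
  set c : ℂ := 2 * (π : ℂ) * Complex.I * (q : ℂ) / (K : ℂ) with hc_def
  obtain ⟨r, hr0, haim⟩ : ∃ r : ℝ, r ≠ 0 ∧ a = Complex.I * (r : ℂ) := by
    refine ⟨π * f / (2 * K), div_ne_zero (mul_ne_zero pi_ne_zero hf) (by positivity), ?_⟩
    rw [ha_def]; push_cast; ring
  have ha : a.re = 0 := by rw [haim]; simp [Complex.mul_re]
  have him : a.im ≠ 0 := by
    rw [haim]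
    simpa [Complex.mul_im] using hr0
  have ha0 : a ≠ 0 := CS.ha0 him
  have ht : c / (2 * a) = 2 * (q : ℂ) / (f : ℂ) := by
    rw [div_eq_div_iff (mul_ne_zero two_ne_zero ha0) hfne, ha_def, hc_def]
    field_simp
  have hexp : (0 : ℂ) - c ^ 2 / (4 * a)
      = -(2 * (π : ℂ) * Complex.I * (q : ℂ) ^ 2) / ((K : ℂ) * (f : ℂ)) := by
    rw [zero_sub, neg_div, neg_inj,
      div_eq_div_iff (mul_ne_zero (by norm_num) ha0) (mul_ne_zero hKne hfne), ha_def, hc_def]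
    field_simp
    ring
  refine ⟨Lfun a c P, Lfun a 0 (P.comp (X - C (2 * (q : ℂ) / (f : ℂ)))), ?_, ?_, ?_⟩
  · refine (CS.tendsto_Jint ha him c P).congr fun ε => ?_
    unfold Jint
    congr 1 with x
    rw [show (a - (ε : ℂ)) * (x : ℂ) ^ 2 + c * (x : ℂ)
        = Complex.I * (π : ℂ) * (f : ℂ) * (x : ℂ) ^ 2 / (2 * (K : ℂ))
          + (c * (x : ℂ) + -(ε : ℂ) * (x : ℂ) ^ 2) from by rw [ha_def]; ring,
      Complex.exp_add, Complex.exp_add]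
    ring
  · refine (CS.tendsto_Jint ha him 0 (P.comp (X - C (2 * (q : ℂ) / (f : ℂ))))).congr fun ε => ?_
    unfold Jint
    congr 1 with x
    rw [eval_comp, eval_sub, eval_X, eval_C,
      show (a - (ε : ℂ)) * (x : ℂ) ^ 2 + 0 * (x : ℂ)
        = Complex.I * (π : ℂ) * (f : ℂ) * (x : ℂ) ^ 2 / (2 * (K : ℂ))
          + -(ε : ℂ) * (x : ℂ) ^ 2 from by rw [ha_def]; ring,
      Complex.exp_add]
    ring
  · have := CS.Lfun_shift ha him c P.natDegree P le_rfl
    rw [ht, hexp] at this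
    exact this

end CSaux
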